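/- Let Φ : ℝ^N → ℝ satisfy (λ|A| − 1)₊ ≤ Φ(A) ≤ Λ|A| + 1 for all A ∈ ℝ^N, where 0 < λ ≤ Λ. Assume Φ is differentiable on ℝ^N with q := ∇Φ, and that the convexification Φ** is differentiable on ℝ^N. Then for all A₁, A₂ in the contact set B := {A ∈ ℝ^N : Φ**(A) = Φ(A)} one has (q(A₁) − q(A₂)) · (A₁ − A₂) ≥ 0. -/

import Mathlib

/-- The convex envelope (convexification) `Φ**` of `Φ`: the pointwise supremum
of all convex functions lying below `Φ`. -/
noncomputable def convexEnvelope {N : ℕ}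
    (Φ : EuclideanSpace ℝ (Fin N) → ℝ) (A : EuclideanSpace ℝ (Fin N)) : ℝ :=
  sSup {y : ℝ | ∃ g : EuclideanSpace ℝ (Fin N) → ℝ,
    ConvexOn ℝ Set.univ g ∧ (∀ z, g z ≤ Φ z) ∧ y = g A}

/-- Gradient inequality for a convex function: `⟪∇f x, y - x⟫ ≤ f y - f x`. -/
lemma convex_gradient_ineq {E : Type*} [NormedAddCommGroup E] [InnerProductSpace ℝ E]
    [CompleteSpace E]
    {f : E → ℝ} (hf : ConvexOn ℝ Set.univ f) {x y : E} {g : E}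
    (hg : HasGradientAt f g x) : (inner ℝ g (y - x) : ℝ) ≤ f y - f x := by
  rcases eq_or_ne x y with rfl | hxy
  · simp
  set c : ℝ → E := fun t => x + t • (y - x) with hc
  have hcd : ∀ t : ℝ, HasDerivAt c (y - x) t := by
    intro t
    have h1 : HasDerivAt (fun t : ℝ => t • (y - x)) ((1 : ℝ) • (y - x)) t :=
      (hasDerivAt_id t).smul_const (y - x)
    simpa [hc] using h1.const_add x
  have hφconv : ConvexOn ℝ Set.univ (f ∘ c) := by
    have := hf.comp_affineMap (AffineMap.lineMap x y : ℝ →ᵃ[ℝ] E)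
    have heq : (f ∘ (AffineMap.lineMap x y : ℝ →ᵃ[ℝ] E)) = f ∘ c := by
      funext t
      simp only [hc, AffineMap.lineMap_apply_module, Function.comp]
      congr 1
      module
    rw [heq] at this
    simpa using this
  have hφd : HasDerivAt (f ∘ c) ((inner ℝ g (y - x) : ℝ)) 0 := by
    have h0 : c 0 = x := by simp [hc]
    have := hg.hasFDerivAt
    rw [← h0] at this
    have hcomp := this.comp_hasDerivAt 0 (hcd 0)
    simpa using hcomp
  have hslope := hφconv.le_slope_of_hasDerivAt (Set.mem_univ (0:ℝ)) (Set.mem_univ (1:ℝ))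
    (by norm_num) hφd
  have hs : slope (f ∘ c) 0 1 = f y - f x := by
    simp [slope_def_field, hc, Function.comp]
  rw [hs] at hslope
  exact hslope

/-- On the contact set `B = {Φ** = Φ}`, the gradient `q = ∇Φ` is monotone:
`(q(A₁) − q(A₂)) · (A₁ − A₂) ≥ 0` for all `A₁, A₂ ∈ B`. -/
theorem gradient_monotone_on_contact_set {N : ℕ} (lam Lam : ℝ)
    (hlam : 0 < lam) (hlL : lam ≤ Lam)
    (Φ : EuclideanSpace ℝ (Fin N) → ℝ)
    (hlow : ∀ A, max (lam * ‖A‖ - 1) 0 ≤ Φ A)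
    (hup : ∀ A, Φ A ≤ Lam * ‖A‖ + 1)
    (q p : EuclideanSpace ℝ (Fin N) → EuclideanSpace ℝ (Fin N))
    (hq : ∀ x, HasGradientAt Φ (q x) x)
    (hp : ∀ x, HasGradientAt (convexEnvelope Φ) (p x) x) :
    ∀ A₁ ∈ {A : EuclideanSpace ℝ (Fin N) | convexEnvelope Φ A = Φ A},
      ∀ A₂ ∈ {A : EuclideanSpace ℝ (Fin N) | convexEnvelope Φ A = Φ A},
        (0 : ℝ) ≤ inner ℝ (q A₁ - q A₂) (A₁ - A₂) := by
  have hS : ∀ A, convexEnvelope Φ A = sSup {y : ℝ | ∃ g : EuclideanSpace ℝ (Fin N) → ℝ,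
    ConvexOn ℝ Set.univ g ∧ (∀ z, g z ≤ Φ z) ∧ y = g A} := fun A => rfl
  set S : EuclideanSpace ℝ (Fin N) → Set ℝ := fun A => {y : ℝ | ∃ g : EuclideanSpace ℝ (Fin N) → ℝ,
    ConvexOn ℝ Set.univ g ∧ (∀ z, g z ≤ Φ z) ∧ y = g A}
  have hΦ0 : ∀ z, (0 : ℝ) ≤ Φ z := fun z => le_trans (le_max_right _ _) (hlow z)
  have hne : ∀ A, ((0:ℝ)) ∈ S A := by
    intro A
    exact ⟨fun _ => 0, convexOn_const 0 convex_univ, fun z => hΦ0 z, rfl⟩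
  have hbdd : ∀ A, BddAbove (S A) := by
    intro A
    refine ⟨Φ A, ?_⟩
    rintro y ⟨g, _, hgle, rfl⟩
    exact hgle A
  have hmem_le : ∀ A {g : EuclideanSpace ℝ (Fin N) → ℝ}, ConvexOn ℝ Set.univ g → (∀ z, g z ≤ Φ z) →
      g A ≤ convexEnvelope Φ A := by
    intro A g hg hgle
    exact le_csSup (hbdd A) ⟨g, hg, hgle, rfl⟩
  have hle : ∀ A, convexEnvelope Φ A ≤ Φ A := by
    intro A
    apply csSup_le ⟨0, hne A⟩
    rintro y ⟨g, _, hgle, rfl⟩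
    exact hgle A
  have hconv : ConvexOn ℝ Set.univ (convexEnvelope Φ) := by
    refine ⟨convex_univ, ?_⟩
    intro x _ y _ a b ha hb hab
    apply csSup_le ⟨0, hne _⟩
    rintro z ⟨g, hg, hgle, rfl⟩
    calc g (a • x + b • y) ≤ a * g x + b * g y :=
          hg.2 (Set.mem_univ x) (Set.mem_univ y) ha hb hab
      _ ≤ a * convexEnvelope Φ x + b * convexEnvelope Φ y := by
          gcongr
          exacts [hmem_le x hg hgle, hmem_le y hg hgle]
  -- On the contact set, q = p
  have hqp : ∀ A ∈ {A : EuclideanSpace ℝ (Fin N) | convexEnvelope Φ A = Φ A}, q A = p A := by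
    intro A hA
    have hF : HasFDerivAt (fun x => Φ x - convexEnvelope Φ x)
        ((InnerProductSpace.toDual ℝ (EuclideanSpace ℝ (Fin N))) (q A) - (InnerProductSpace.toDual ℝ (EuclideanSpace ℝ (Fin N))) (p A)) A :=
      (hq A).hasFDerivAt.sub (hp A).hasFDerivAt
    have hmin : IsLocalMin (fun x => Φ x - convexEnvelope Φ x) A := by
      apply Filter.Eventually.of_forall
      intro x
      have h1 : Φ A - convexEnvelope Φ A = 0 := by rw [hA]; ring
      have h2 : (0:ℝ) ≤ Φ x - convexEnvelope Φ x := sub_nonneg.mpr (hle x)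
      simpa [h1] using h2
    have hzero := hmin.hasFDerivAt_eq_zero hF
    have : (InnerProductSpace.toDual ℝ (EuclideanSpace ℝ (Fin N))) (q A) = (InnerProductSpace.toDual ℝ (EuclideanSpace ℝ (Fin N))) (p A) :=
      sub_eq_zero.mp hzero
    exact (InnerProductSpace.toDual ℝ (EuclideanSpace ℝ (Fin N))).injective this
  intro A₁ hA₁ A₂ hA₂
  have h1 : (inner ℝ (p A₁) (A₂ - A₁) : ℝ) ≤ convexEnvelope Φ A₂ - convexEnvelope Φ A₁ :=
    convex_gradient_ineq hconv (hp A₁)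
  have h2 : (inner ℝ (p A₂) (A₁ - A₂) : ℝ) ≤ convexEnvelope Φ A₁ - convexEnvelope Φ A₂ :=
    convex_gradient_ineq hconv (hp A₂)
  rw [hqp A₁ hA₁, hqp A₂ hA₂]
  have hsum := add_le_add h1 h2
  have e1 : (A₂ : EuclideanSpace ℝ (Fin N)) - A₁ = -(A₁ - A₂) := by abel
  rw [e1, inner_neg_right] at hsum
  rw [inner_sub_left]
  linarith
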